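/- arXiv:1905.04559 — 3 statements merged into one kernel-verified Lean document; each statement's English description precedes it below -/
import Mathlib

section
/- The function f(θ,θ₁,θ₂,θ₃) = θ^(1+ρ₁+ρ₂+ρ₃) · θ₁^(−ρ₁) · θ₂^(−ρ₂) · θ₃^(−ρ₃) is convex on the positive orthant (θ,θ₁,θ₂,θ₃) ∈ ℝ⁴₊ for any fixed nonnegative exponents ρ₁, ρ₂, ρ₃ ≥ 0. -/
open Real

/-- Two-point, four-factor Hölder inequality from weighted AM-GM. -/
lemma holder4 {w₁ w₂ w₃ w₄ p₁ p₂ p₃ p₄ q₁ q₂ q₃ q₄ : ℝ}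
    (hw₁ : 0 ≤ w₁) (hw₂ : 0 ≤ w₂) (hw₃ : 0 ≤ w₃) (hw₄ : 0 ≤ w₄)
    (hp₁ : 0 < p₁) (hp₂ : 0 < p₂) (hp₃ : 0 < p₃) (hp₄ : 0 < p₄)
    (hq₁ : 0 < q₁) (hq₂ : 0 < q₂) (hq₃ : 0 < q₃) (hq₄ : 0 < q₄)
    (hw : w₁ + w₂ + w₃ + w₄ = 1) :
    p₁ ^ w₁ * p₂ ^ w₂ * p₃ ^ w₃ * p₄ ^ w₄ + q₁ ^ w₁ * q₂ ^ w₂ * q₃ ^ w₃ * q₄ ^ w₄ ≤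
      (p₁ + q₁) ^ w₁ * (p₂ + q₂) ^ w₂ * (p₃ + q₃) ^ w₃ * (p₄ + q₄) ^ w₄ := by
  have hs₁ : 0 < p₁ + q₁ := by linarith
  have hs₂ : 0 < p₂ + q₂ := by linarith
  have hs₃ : 0 < p₃ + q₃ := by linarith
  have hs₄ : 0 < p₄ + q₄ := by linarith
  have hP := Real.geom_mean_le_arith_mean4_weighted hw₁ hw₂ hw₃ hw₄
    (le_of_lt (div_pos hp₁ hs₁)) (le_of_lt (div_pos hp₂ hs₂))
    (le_of_lt (div_pos hp₃ hs₃)) (le_of_lt (div_pos hp₄ hs₄)) hw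
  have hQ := Real.geom_mean_le_arith_mean4_weighted hw₁ hw₂ hw₃ hw₄
    (le_of_lt (div_pos hq₁ hs₁)) (le_of_lt (div_pos hq₂ hs₂))
    (le_of_lt (div_pos hq₃ hs₃)) (le_of_lt (div_pos hq₄ hs₄)) hw
  have key : (p₁ / (p₁ + q₁)) ^ w₁ * (p₂ / (p₂ + q₂)) ^ w₂ * (p₃ / (p₃ + q₃)) ^ w₃ *
        (p₄ / (p₄ + q₄)) ^ w₄ +
      (q₁ / (p₁ + q₁)) ^ w₁ * (q₂ / (p₂ + q₂)) ^ w₂ * (q₃ / (p₃ + q₃)) ^ w₃ *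
        (q₄ / (p₄ + q₄)) ^ w₄ ≤ 1 := by
    have e : ∀ (pp qq w : ℝ), 0 < pp → 0 < qq → w * (pp / (pp + qq)) + w * (qq / (pp + qq)) = w := by
      intro pp qq w hpp hqq
      have : pp + qq ≠ 0 := by positivity
      field_simp
    have hsum := e p₁ q₁ w₁ hp₁ hq₁
    have hsum2 := e p₂ q₂ w₂ hp₂ hq₂
    have hsum3 := e p₃ q₃ w₃ hp₃ hq₃
    have hsum4 := e p₄ q₄ w₄ hp₄ hq₄
    linarith
  have hdiv : ∀ (a b : ℝ) (w : ℝ), 0 < a → 0 < b → (a / b) ^ w = a ^ w / b ^ w := fun a b w ha hb =>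
    Real.div_rpow ha.le hb.le w
  rw [hdiv _ _ _ hp₁ hs₁, hdiv _ _ _ hp₂ hs₂, hdiv _ _ _ hp₃ hs₃, hdiv _ _ _ hp₄ hs₄,
    hdiv _ _ _ hq₁ hs₁, hdiv _ _ _ hq₂ hs₂, hdiv _ _ _ hq₃ hs₃, hdiv _ _ _ hq₄ hs₄] at key
  have hspos : (0:ℝ) < (p₁ + q₁) ^ w₁ * (p₂ + q₂) ^ w₂ * (p₃ + q₃) ^ w₃ * (p₄ + q₄) ^ w₄ := by
    positivity
  calc p₁ ^ w₁ * p₂ ^ w₂ * p₃ ^ w₃ * p₄ ^ w₄ + q₁ ^ w₁ * q₂ ^ w₂ * q₃ ^ w₃ * q₄ ^ w₄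
      = (p₁ ^ w₁ / (p₁ + q₁) ^ w₁ * (p₂ ^ w₂ / (p₂ + q₂) ^ w₂) * (p₃ ^ w₃ / (p₃ + q₃) ^ w₃) *
          (p₄ ^ w₄ / (p₄ + q₄) ^ w₄) +
        q₁ ^ w₁ / (p₁ + q₁) ^ w₁ * (q₂ ^ w₂ / (p₂ + q₂) ^ w₂) * (q₃ ^ w₃ / (p₃ + q₃) ^ w₃) *
          (q₄ ^ w₄ / (p₄ + q₄) ^ w₄)) *
        ((p₁ + q₁) ^ w₁ * (p₂ + q₂) ^ w₂ * (p₃ + q₃) ^ w₃ * (p₄ + q₄) ^ w₄) := by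
        field_simp
    _ ≤ 1 * ((p₁ + q₁) ^ w₁ * (p₂ + q₂) ^ w₂ * (p₃ + q₃) ^ w₃ * (p₄ + q₄) ^ w₄) := by
        apply mul_le_mul_of_nonneg_right _ hspos.le
        convert key using 2 <;> ring
    _ = (p₁ + q₁) ^ w₁ * (p₂ + q₂) ^ w₂ * (p₃ + q₃) ^ w₃ * (p₄ + q₄) ^ w₄ := one_mul _

section

variable (ρ₁ ρ₂ ρ₃ : ℝ)

/-- The function in question, on coordinates. -/
noncomputable def F (a b c d : ℝ) : ℝ :=
  a ^ (1 + ρ₁ + ρ₂ + ρ₃) * b ^ (-ρ₁) * c ^ (-ρ₂) * d ^ (-ρ₃)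

lemma F_pos (h₁ : 0 ≤ ρ₁) (h₂ : 0 ≤ ρ₂) (h₃ : 0 ≤ ρ₃)
    {a b c d : ℝ} (ha : 0 < a) (hb : 0 < b) (hc : 0 < c) (hd : 0 < d) :
    0 < F ρ₁ ρ₂ ρ₃ a b c d := by
  unfold F
  positivity

/-- Homogeneity of degree 1. -/
lemma F_smul (h₁ : 0 ≤ ρ₁) (h₂ : 0 ≤ ρ₂) (h₃ : 0 ≤ ρ₃)
    {t a b c d : ℝ} (ht : 0 < t) (ha : 0 < a) (hb : 0 < b) (hc : 0 < c) (hd : 0 < d) :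
    F ρ₁ ρ₂ ρ₃ (t * a) (t * b) (t * c) (t * d) = t * F ρ₁ ρ₂ ρ₃ a b c d := by
  unfold F
  rw [Real.mul_rpow ht.le ha.le, Real.mul_rpow ht.le hb.le, Real.mul_rpow ht.le hc.le,
    Real.mul_rpow ht.le hd.le]
  have : t ^ (1 + ρ₁ + ρ₂ + ρ₃) * t ^ (-ρ₁) * t ^ (-ρ₂) * t ^ (-ρ₃) = t := by
    rw [← Real.rpow_add ht, ← Real.rpow_add ht, ← Real.rpow_add ht]
    ring_nf
    exact Real.rpow_one t
  calc t ^ (1 + ρ₁ + ρ₂ + ρ₃) * a ^ (1 + ρ₁ + ρ₂ + ρ₃) * (t ^ (-ρ₁) * b ^ (-ρ₁)) *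
        (t ^ (-ρ₂) * c ^ (-ρ₂)) * (t ^ (-ρ₃) * d ^ (-ρ₃))
      = (t ^ (1 + ρ₁ + ρ₂ + ρ₃) * t ^ (-ρ₁) * t ^ (-ρ₂) * t ^ (-ρ₃)) *
        (a ^ (1 + ρ₁ + ρ₂ + ρ₃) * b ^ (-ρ₁) * c ^ (-ρ₂) * d ^ (-ρ₃)) := by ring
    _ = t * (a ^ (1 + ρ₁ + ρ₂ + ρ₃) * b ^ (-ρ₁) * c ^ (-ρ₂) * d ^ (-ρ₃)) := by rw [this]

/-- Subadditivity. -/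
lemma F_subadd (h₁ : 0 ≤ ρ₁) (h₂ : 0 ≤ ρ₂) (h₃ : 0 ≤ ρ₃)
    {a b c d a' b' c' d' : ℝ} (ha : 0 < a) (hb : 0 < b) (hc : 0 < c) (hd : 0 < d)
    (ha' : 0 < a') (hb' : 0 < b') (hc' : 0 < c') (hd' : 0 < d') :
    F ρ₁ ρ₂ ρ₃ (a + a') (b + b') (c + c') (d + d') ≤
      F ρ₁ ρ₂ ρ₃ a b c d + F ρ₁ ρ₂ ρ₃ a' b' c' d' := by
  set p : ℝ := 1 + ρ₁ + ρ₂ + ρ₃ with hp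
  have hppos : 0 < p := by simp only [hp]; linarith
  set A : ℝ := F ρ₁ ρ₂ ρ₃ a b c d with hA
  set B : ℝ := F ρ₁ ρ₂ ρ₃ a' b' c' d' with hB
  have hApos : 0 < A := F_pos _ _ _ h₁ h₂ h₃ ha hb hc hd
  have hBpos : 0 < B := F_pos _ _ _ h₁ h₂ h₃ ha' hb' hc' hd'
  have rep : ∀ (A₀ a₀ b₀ c₀ d₀ : ℝ), 0 < a₀ → 0 < b₀ → 0 < c₀ → 0 < d₀ →
      A₀ = F ρ₁ ρ₂ ρ₃ a₀ b₀ c₀ d₀ →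
      a₀ = A₀ ^ (1/p) * b₀ ^ (ρ₁/p) * c₀ ^ (ρ₂/p) * d₀ ^ (ρ₃/p) := by
    intro A₀ a₀ b₀ c₀ d₀ ha₀ hb₀ hc₀ hd₀ hA₀
    have hA₀pos : 0 < A₀ := hA₀ ▸ F_pos _ _ _ h₁ h₂ h₃ ha₀ hb₀ hc₀ hd₀
    have key : A₀ * b₀ ^ ρ₁ * c₀ ^ ρ₂ * d₀ ^ ρ₃ = a₀ ^ p := by
      rw [hA₀]; unfold F
      have e1 : b₀ ^ (-ρ₁) * b₀ ^ ρ₁ = 1 := by rw [← Real.rpow_add hb₀]; simp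
      have e2 : c₀ ^ (-ρ₂) * c₀ ^ ρ₂ = 1 := by rw [← Real.rpow_add hc₀]; simp
      have e3 : d₀ ^ (-ρ₃) * d₀ ^ ρ₃ = 1 := by rw [← Real.rpow_add hd₀]; simp
      calc a₀ ^ (1 + ρ₁ + ρ₂ + ρ₃) * b₀ ^ (-ρ₁) * c₀ ^ (-ρ₂) * d₀ ^ (-ρ₃) * b₀ ^ ρ₁ * c₀ ^ ρ₂ *
            d₀ ^ ρ₃
          = a₀ ^ (1 + ρ₁ + ρ₂ + ρ₃) * (b₀ ^ (-ρ₁) * b₀ ^ ρ₁) * (c₀ ^ (-ρ₂) * c₀ ^ ρ₂) *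
            (d₀ ^ (-ρ₃) * d₀ ^ ρ₃) := by ring
        _ = a₀ ^ p := by rw [e1, e2, e3, hp]; ring
    have expand : (A₀ * b₀ ^ ρ₁ * c₀ ^ ρ₂ * d₀ ^ ρ₃) ^ (1/p) =
        A₀ ^ (1/p) * b₀ ^ (ρ₁/p) * c₀ ^ (ρ₂/p) * d₀ ^ (ρ₃/p) := by
      rw [Real.mul_rpow (by positivity) (by positivity),
        Real.mul_rpow (by positivity) (by positivity),
        Real.mul_rpow (by positivity) (by positivity),
        ← Real.rpow_mul hb₀.le, ← Real.rpow_mul hc₀.le, ← Real.rpow_mul hd₀.le,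
        mul_one_div, mul_one_div, mul_one_div]
    calc a₀ = (a₀ ^ p) ^ (1/p) := by
          rw [← Real.rpow_mul ha₀.le, mul_one_div, div_self hppos.ne', Real.rpow_one]
      _ = (A₀ * b₀ ^ ρ₁ * c₀ ^ ρ₂ * d₀ ^ ρ₃) ^ (1/p) := by rw [key]
      _ = A₀ ^ (1/p) * b₀ ^ (ρ₁/p) * c₀ ^ (ρ₂/p) * d₀ ^ (ρ₃/p) := expand
  have repu := rep A a b c d ha hb hc hd hA
  have repv := rep B a' b' c' d' ha' hb' hc' hd' hB
  have hw : 1/p + ρ₁/p + ρ₂/p + ρ₃/p = 1 := by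
    rw [← add_div, ← add_div, ← add_div, ← hp, div_self hppos.ne']
  have hol := holder4 (w₁ := 1/p) (w₂ := ρ₁/p) (w₃ := ρ₂/p) (w₄ := ρ₃/p)
    (by positivity) (by positivity) (by positivity) (by positivity)
    hApos hb hc hd hBpos hb' hc' hd' hw
  have hsum : a + a' ≤ (A + B) ^ (1/p) * (b + b') ^ (ρ₁/p) * (c + c') ^ (ρ₂/p) *
      (d + d') ^ (ρ₃/p) := by rw [repu, repv]; exact hol
  -- raise both sides to the power p
  have hab : (0:ℝ) < a + a' := by linarith
  have hbb : (0:ℝ) < b + b' := by linarith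
  have hcc : (0:ℝ) < c + c' := by linarith
  have hdd : (0:ℝ) < d + d' := by linarith
  have hAB : (0:ℝ) < A + B := by linarith
  have hpow := Real.rpow_le_rpow hab.le hsum hppos.le
  rw [Real.mul_rpow (by positivity) (by positivity),
    Real.mul_rpow (by positivity) (by positivity),
    Real.mul_rpow (by positivity) (by positivity),
    ← Real.rpow_mul hAB.le, ← Real.rpow_mul hbb.le, ← Real.rpow_mul hcc.le,
    ← Real.rpow_mul hdd.le, one_div_mul_cancel hppos.ne', Real.rpow_one,
    div_mul_cancel₀ _ hppos.ne', div_mul_cancel₀ _ hppos.ne',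
    div_mul_cancel₀ _ hppos.ne'] at hpow
  -- now hpow : (a+a')^p ≤ (A+B) * (b+b')^ρ₁ * (c+c')^ρ₂ * (d+d')^ρ₃
  unfold F
  rw [← hp]
  have hineq : (a + a') ^ p * (b + b') ^ (-ρ₁) * (c + c') ^ (-ρ₂) * (d + d') ^ (-ρ₃) ≤
      ((A + B) * (b + b') ^ ρ₁ * (c + c') ^ ρ₂ * (d + d') ^ ρ₃) *
        ((b + b') ^ (-ρ₁) * (c + c') ^ (-ρ₂) * (d + d') ^ (-ρ₃)) := by
    have hnn : (0:ℝ) ≤ (b + b') ^ (-ρ₁) * (c + c') ^ (-ρ₂) * (d + d') ^ (-ρ₃) := by positivity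
    calc (a + a') ^ p * (b + b') ^ (-ρ₁) * (c + c') ^ (-ρ₂) * (d + d') ^ (-ρ₃)
        = (a + a') ^ p * ((b + b') ^ (-ρ₁) * (c + c') ^ (-ρ₂) * (d + d') ^ (-ρ₃)) := by ring
      _ ≤ ((A + B) * (b + b') ^ ρ₁ * (c + c') ^ ρ₂ * (d + d') ^ ρ₃) *
          ((b + b') ^ (-ρ₁) * (c + c') ^ (-ρ₂) * (d + d') ^ (-ρ₃)) :=
          mul_le_mul_of_nonneg_right hpow hnn
  refine hineq.trans_eq ?_
  have e1 : (b + b') ^ ρ₁ * (b + b') ^ (-ρ₁) = 1 := by rw [← Real.rpow_add hbb]; simp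
  have e2 : (c + c') ^ ρ₂ * (c + c') ^ (-ρ₂) = 1 := by rw [← Real.rpow_add hcc]; simp
  have e3 : (d + d') ^ ρ₃ * (d + d') ^ (-ρ₃) = 1 := by rw [← Real.rpow_add hdd]; simp
  calc (A + B) * (b + b') ^ ρ₁ * (c + c') ^ ρ₂ * (d + d') ^ ρ₃ *
        ((b + b') ^ (-ρ₁) * (c + c') ^ (-ρ₂) * (d + d') ^ (-ρ₃))
      = (A + B) * ((b + b') ^ ρ₁ * (b + b') ^ (-ρ₁)) * ((c + c') ^ ρ₂ * (c + c') ^ (-ρ₂)) *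
        ((d + d') ^ ρ₃ * (d + d') ^ (-ρ₃)) := by ring
    _ = A + B := by rw [e1, e2, e3]; ring

end

theorem convexity_of_f (ρ₁ ρ₂ ρ₃ : ℝ) (h₁ : 0 ≤ ρ₁) (h₂ : 0 ≤ ρ₂) (h₃ : 0 ≤ ρ₃) :
    ConvexOn ℝ {x : ℝ × ℝ × ℝ × ℝ | 0 < x.1 ∧ 0 < x.2.1 ∧ 0 < x.2.2.1 ∧ 0 < x.2.2.2}
      (fun x : ℝ × ℝ × ℝ × ℝ =>
        x.1 ^ (1 + ρ₁ + ρ₂ + ρ₃) * x.2.1 ^ (-ρ₁) * x.2.2.1 ^ (-ρ₂) * x.2.2.2 ^ (-ρ₃)) := by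
  have poscomb : ∀ (ta tb u v : ℝ), 0 ≤ ta → 0 ≤ tb → ta + tb = 1 → 0 < u → 0 < v →
      0 < ta * u + tb * v := by
    intro ta tb u v hta htb htab hu hv
    rcases hta.eq_or_lt with h | h
    · rw [← h] at htab ⊢
      simp at htab ⊢
      rw [htab]; simpa using hv
    · have h1 : 0 < ta * u := mul_pos h hu
      have h2 : 0 ≤ tb * v := mul_nonneg htb hv.le
      linarith
  constructor
  · intro x hx y hy ta tb hta htb htab
    simp only [Set.mem_setOf_eq, Prod.fst_add, Prod.snd_add, Prod.smul_fst, Prod.smul_snd,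
      smul_eq_mul] at *
    exact ⟨poscomb _ _ _ _ hta htb htab hx.1 hy.1,
      poscomb _ _ _ _ hta htb htab hx.2.1 hy.2.1,
      poscomb _ _ _ _ hta htb htab hx.2.2.1 hy.2.2.1,
      poscomb _ _ _ _ hta htb htab hx.2.2.2 hy.2.2.2⟩
  · intro x hx y hy ta tb hta htb htab
    simp only [Set.mem_setOf_eq] at hx hy
    obtain ⟨hx1, hx2, hx3, hx4⟩ := hx
    obtain ⟨hy1, hy2, hy3, hy4⟩ := hy
    simp only [Prod.fst_add, Prod.snd_add, Prod.smul_fst, Prod.smul_snd, smul_eq_mul]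
    rcases hta.eq_or_lt with h | h
    · have hb1 : tb = 1 := by linarith
      rw [← h, hb1]
      simp
    rcases htb.eq_or_lt with h' | h'
    · have ha1 : ta = 1 := by linarith
      rw [← h', ha1]
      simp
    have key := F_subadd ρ₁ ρ₂ ρ₃ h₁ h₂ h₃ (mul_pos h hx1) (mul_pos h hx2) (mul_pos h hx3) (mul_pos h hx4) (mul_pos h' hy1) (mul_pos h' hy2) (mul_pos h' hy3) (mul_pos h' hy4)
    have e1 := F_smul ρ₁ ρ₂ ρ₃ h₁ h₂ h₃ h hx1 hx2 hx3 hx4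
    have e2 := F_smul ρ₁ ρ₂ ρ₃ h₁ h₂ h₃ h' hy1 hy2 hy3 hy4
    rw [e1, e2] at key
    exact key
end

section
/- Let α, β, γA, γB be positive reals and μ*, ν*, η* reals with min(μ*,ν*) ≥ η* ≥ 0, satisfying α^(1+μ*+ν*−η*) · γA^(−μ*+η*) · γB^(−ν*+η*) · β^(−η*) ≤ 1. Suppose additionally that for some N > 1, λ > 0, δ > 0: α ≥ N^(max(1,δ)−λ), α/γA ≥ N^(1−λ), α/γB ≥ N^(δ−λ), and α/β ≥ N^(1+δ−λ). Then λ ≥ (max(1,δ) + μ* + δ·ν*)/(1 + μ* + ν* − η*). -/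
theorem lower_bound_exponent (α β γA γB μ ν η N lam δ : ℝ)
    (hα : 0 < α) (hβ : 0 < β) (hγA : 0 < γA) (hγB : 0 < γB)
    (hη0 : 0 ≤ η) (hημ : η ≤ μ) (hην : η ≤ ν)
    (hkey : α ^ (1 + μ + ν - η) * γA ^ (-μ + η) * γB ^ (-ν + η) * β ^ (-η) ≤ 1)
    (hN : 1 < N) (hlam : 0 < lam) (hδ : 0 < δ)
    (h1 : N ^ (max 1 δ - lam) ≤ α)
    (h2 : N ^ (1 - lam) ≤ α / γA)
    (h3 : N ^ (δ - lam) ≤ α / γB)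
    (h4 : N ^ (1 + δ - lam) ≤ α / β) :
    (max 1 δ + μ + δ * ν) / (1 + μ + ν - η) ≤ lam := by
  have hμη : 0 ≤ μ - η := by linarith
  have hνη : 0 ≤ ν - η := by linarith
  have hD : 0 < 1 + μ + ν - η := by linarith
  have hN0 : (0:ℝ) < N := lt_trans one_pos hN
  have hA : N ^ ((1 - lam) * (μ - η)) ≤ (α / γA) ^ (μ - η) := by
    rw [Real.rpow_mul hN0.le]
    exact Real.rpow_le_rpow (Real.rpow_nonneg hN0.le _) h2 hμη
  have hB : N ^ ((δ - lam) * (ν - η)) ≤ (α / γB) ^ (ν - η) := by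
    rw [Real.rpow_mul hN0.le]
    exact Real.rpow_le_rpow (Real.rpow_nonneg hN0.le _) h3 hνη
  have hC : N ^ ((1 + δ - lam) * η) ≤ (α / β) ^ η := by
    rw [Real.rpow_mul hN0.le]
    exact Real.rpow_le_rpow (Real.rpow_nonneg hN0.le _) h4 hη0
  have hprod : N ^ (max 1 δ - lam) * N ^ ((1 - lam) * (μ - η)) *
      N ^ ((δ - lam) * (ν - η)) * N ^ ((1 + δ - lam) * η) ≤
      α * (α / γA) ^ (μ - η) * (α / γB) ^ (ν - η) * (α / β) ^ η := by
    gcongr <;> positivity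
  have hRHS : α * (α / γA) ^ (μ - η) * (α / γB) ^ (ν - η) * (α / β) ^ η =
      α ^ (1 + μ + ν - η) * γA ^ (-μ + η) * γB ^ (-ν + η) * β ^ (-η) := by
    rw [Real.div_rpow hα.le hγA.le, Real.div_rpow hα.le hγB.le,
      Real.div_rpow hα.le hβ.le, div_eq_mul_inv, div_eq_mul_inv, div_eq_mul_inv,
      ← Real.rpow_neg hγA.le, ← Real.rpow_neg hγB.le, ← Real.rpow_neg hβ.le,
      show (-(μ - η)) = -μ + η from by ring, show (-(ν - η)) = -ν + η from by ring,
      show α ^ (1 + μ + ν - η) = α ^ (1:ℝ) * α ^ (μ - η) * α ^ (ν - η) * α ^ η from by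
        rw [← Real.rpow_add hα, ← Real.rpow_add hα, ← Real.rpow_add hα]; ring_nf,
      Real.rpow_one]
    ring
  have hE : N ^ (max 1 δ + μ + δ * ν - lam * (1 + μ + ν - η)) ≤ 1 := by
    calc N ^ (max 1 δ + μ + δ * ν - lam * (1 + μ + ν - η))
        = N ^ (max 1 δ - lam) * N ^ ((1 - lam) * (μ - η)) *
          N ^ ((δ - lam) * (ν - η)) * N ^ ((1 + δ - lam) * η) := by
          rw [← Real.rpow_add hN0, ← Real.rpow_add hN0, ← Real.rpow_add hN0]
          ring_nf
      _ ≤ α ^ (1 + μ + ν - η) * γA ^ (-μ + η) * γB ^ (-ν + η) * β ^ (-η) :=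
          hRHS ▸ hprod
      _ ≤ 1 := hkey
  have hE0 : max 1 δ + μ + δ * ν - lam * (1 + μ + ν - η) ≤ 0 := by
    have h := hE.trans_eq (Real.rpow_zero N).symm
    have := (Real.rpow_le_rpow_left_iff hN).mp h
    simpa using this
  rw [div_le_iff₀ hD]
  linarith
end

section
/- Let p : Fin k × Fin l → ℝ be strictly positive with marginals p^A, p^B, and suppose (μ,ν,η) with min(μ,ν) ≥ η ≥ 0 satisfies Σᵢⱼ pᵢⱼ^(1+μ+ν−η)·(p^A(i))^(−μ)·(p^B(j))^(−ν) = 1. Let G be a finite tree whose nodes carry values Φ, Ψ^A, Ψ^B defined recursively by Φ(root)=Ψ^A(root)=Ψ^B(root)=1 and for the child w of v labeled (i,j): Φ(w)=Φ(v)·pᵢⱼ, Ψ^A(w)=Ψ^A(v)·p^A(i), Ψ^B(w)=Ψ^B(v)·p^B(j). Then for any antichain S of nodes (no node in S is an ancestor of another), Σ_{v∈S} Φ(v)^(1+μ+ν−η) · Ψ^A(v)^(−μ) · Ψ^B(v)^(−ν) ≤ 1. -/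
open Finset

lemma list_prod_pos' {α : Type*} (w : α → ℝ) (hw : ∀ a, 0 < w a) (v : List α) :
    0 < (v.map w).prod := by
  induction v with
  | nil => simp
  | cons a t ih => simpa using mul_pos (hw a) ih

lemma kraft_aux {α : Type*} [Fintype α] [DecidableEq α] (w : α → ℝ)
    (hw : ∀ a, 0 < w a) (hsum : ∑ a, w a = 1) :
    ∀ n : ℕ, ∀ S : Finset (List α), (∀ v ∈ S, v.length ≤ n) →
    (∀ u ∈ S, ∀ v ∈ S, u ≠ v → ¬ u <+: v) →
    ∑ v ∈ S, (v.map w).prod ≤ 1 := by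
  intro n
  induction n with
  | zero =>
    intro S hlen _
    have hS : S ⊆ {[]} := by
      intro v hv
      simp [List.length_eq_zero_iff.mp (Nat.le_zero.mp (hlen v hv))]
    calc ∑ v ∈ S, (v.map w).prod
        ≤ ∑ v ∈ ({[]} : Finset (List α)), (v.map w).prod := by
          apply Finset.sum_le_sum_of_subset_of_nonneg hS
          intro v _ _; exact (list_prod_pos' w hw v).le
      _ = 1 := by simp
  | succ n ih =>
    intro S hlen hanti
    by_cases hnil : ([] : List α) ∈ S
    · have hSeq : S = {[]} := by
        apply Finset.eq_singleton_iff_unique_mem.mpr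
        refine ⟨hnil, fun v hv => ?_⟩
        by_contra hne
        exact hanti [] hnil v hv (fun h => hne h.symm) List.nil_prefix
      simp [hSeq]
    · rw [← Finset.sum_fiberwise S (fun v => v.head?) (fun v => (v.map w).prod)]
      have hbound : ∀ o : Option α,
          ∑ v ∈ S.filter (fun v => v.head? = o), (v.map w).prod ≤ o.elim 0 w := by
        intro o
        match o with
        | none =>
          have : S.filter (fun v => v.head? = (none : Option α)) = ∅ := by
            apply Finset.filter_eq_empty_iff.mpr
            intro v hv h
            apply hnil
            cases v with
            | nil => exact hv
            | cons b t => simp at h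
          rw [this]
          simp
        | some a =>
          set F := S.filter (fun v => v.head? = some a) with hF
          have hmem : ∀ v ∈ F, v = a :: v.tail := by
            intro v hv
            rw [hF, Finset.mem_filter] at hv
            cases v with
            | nil => simp at hv
            | cons b t => simp at hv; simp [hv.2]
          set T := F.image List.tail with hT
          have hinj : ∀ u ∈ F, ∀ v ∈ F, u.tail = v.tail → u = v := by
            intro u hu v hv huv
            rw [hmem u hu, hmem v hv, huv]
          have hsum1 : ∑ v ∈ F, (v.map w).prod = w a * ∑ t ∈ T, (t.map w).prod := by
            rw [hT, Finset.sum_image hinj,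
              Finset.mul_sum]
            apply Finset.sum_congr rfl
            intro v hv
            conv_lhs => rw [hmem v hv]
            simp
          have hTle : ∑ t ∈ T, (t.map w).prod ≤ 1 := by
            apply ih T
            · intro t ht
              rw [hT, Finset.mem_image] at ht
              obtain ⟨v, hv, rfl⟩ := ht
              have hlv := hlen v (Finset.mem_filter.mp hv).1
              rw [hmem v hv] at hlv
              simp only [List.length_cons] at hlv
              omega
            · intro t ht t' ht' hne hpre
              rw [hT, Finset.mem_image] at ht ht'
              obtain ⟨v, hv, rfl⟩ := ht
              obtain ⟨v', hv', rfl⟩ := ht'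
              have h1 := hmem v hv
              have h2 := hmem v' hv'
              apply hanti v (Finset.mem_filter.mp hv).1 v' (Finset.mem_filter.mp hv').1
              · intro h; exact hne (by rw [h])
              · rw [h1, h2]; exact List.cons_prefix_cons.mpr ⟨rfl, hpre⟩
          calc ∑ v ∈ F, (v.map w).prod = w a * ∑ t ∈ T, (t.map w).prod := hsum1
            _ ≤ w a * 1 := by
                apply mul_le_mul_of_nonneg_left hTle (hw a).le
            _ = w a := mul_one _
      calc ∑ o : Option α, ∑ v ∈ S.filter (fun v => v.head? = o), (v.map w).prod
          ≤ ∑ o : Option α, o.elim 0 w := Finset.sum_le_sum (fun o _ => hbound o)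
        _ = ∑ a, w a := by rw [Fintype.sum_option]; simp
        _ = 1 := hsum

theorem antichain_weighted_sum_le_one (k l : ℕ) (p : Fin k × Fin l → ℝ)
    (hpos : ∀ x, 0 < p x)
    (μ ν η : ℝ) (hη : 0 ≤ η) (hημ : η ≤ μ) (hην : η ≤ ν)
    (hnorm : ∑ x : Fin k × Fin l,
        p x ^ (1 + μ + ν - η) * (∑ j : Fin l, p (x.1, j)) ^ (-μ) *
          (∑ i : Fin k, p (i, x.2)) ^ (-ν) = 1)
    (S : Finset (List (Fin k × Fin l)))
    (hanti : ∀ u ∈ S, ∀ v ∈ S, u ≠ v → ¬ u <+: v) :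
    ∑ v ∈ S,
        ((v.map p).prod) ^ (1 + μ + ν - η) *
          ((v.map fun x => ∑ j : Fin l, p (x.1, j)).prod) ^ (-μ) *
          ((v.map fun x => ∑ i : Fin k, p (i, x.2)).prod) ^ (-ν) ≤ 1 := by
  set pA : Fin k × Fin l → ℝ := fun x => ∑ j : Fin l, p (x.1, j) with hpA
  set pB : Fin k × Fin l → ℝ := fun x => ∑ i : Fin k, p (i, x.2) with hpB
  have hpApos : ∀ x, 0 < pA x := fun x =>
    Finset.sum_pos (fun j _ => hpos _) ⟨x.2, Finset.mem_univ _⟩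
  have hpBpos : ∀ x, 0 < pB x := fun x =>
    Finset.sum_pos (fun i _ => hpos _) ⟨x.1, Finset.mem_univ _⟩
  set w : Fin k × Fin l → ℝ :=
    fun x => p x ^ (1 + μ + ν - η) * pA x ^ (-μ) * pB x ^ (-ν) with hw
  have hwpos : ∀ x, 0 < w x := fun x =>
    mul_pos (mul_pos (Real.rpow_pos_of_pos (hpos x) _)
      (Real.rpow_pos_of_pos (hpApos x) _)) (Real.rpow_pos_of_pos (hpBpos x) _)
  have hkey : ∀ v : List (Fin k × Fin l),
      ((v.map p).prod) ^ (1 + μ + ν - η) * ((v.map pA).prod) ^ (-μ) *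
        ((v.map pB).prod) ^ (-ν) = (v.map w).prod := by
    intro v
    induction v with
    | nil => simp
    | cons a t iht =>
      have h1 : 0 < (t.map p).prod := list_prod_pos' p hpos t
      have h2 : 0 < (t.map pA).prod := list_prod_pos' pA hpApos t
      have h3 : 0 < (t.map pB).prod := list_prod_pos' pB hpBpos t
      simp only [List.map_cons, List.prod_cons]
      rw [Real.mul_rpow (hpos a).le h1.le, Real.mul_rpow (hpApos a).le h2.le,
        Real.mul_rpow (hpBpos a).le h3.le, ← iht]
      ring
  calc ∑ v ∈ S,
        ((v.map p).prod) ^ (1 + μ + ν - η) * ((v.map pA).prod) ^ (-μ) *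
          ((v.map pB).prod) ^ (-ν)
      = ∑ v ∈ S, (v.map w).prod := Finset.sum_congr rfl (fun v _ => hkey v)
    _ ≤ 1 := kraft_aux w hwpos hnorm (S.sup List.length) S
        (fun v hv => Finset.le_sup hv) hanti
end
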